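/- For every real ε < 0, the 2×2 real matrix A_ε = [[ε, 1], [−1, −2]] is robustly D-stable: there exists μ > 0 such that for every 2×2 real matrix B with ‖B‖ ≤ μ, the matrix A_ε + B is D-stable. -/

import Mathlib

open Matrix

/-- A square real matrix is Hurwitz if every eigenvalue of it, viewed as a complex
matrix, has strictly negative real part. -/
def IsHurwitz {m : Type*} [Fintype m] [DecidableEq m] (M : Matrix m m ℝ) : Prop :=
  ∀ μ ∈ spectrum ℂ (M.map (algebraMap ℝ ℂ)), μ.re < 0

/-- The operator 2-norm of a square real matrix. -/
noncomputable def opNorm2 {m : Type*} [Fintype m] [DecidableEq m] (M : Matrix m m ℝ) : ℝ :=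
  ‖Matrix.toEuclideanCLM (𝕜 := ℝ) M‖

/-- A 2×2 real matrix is D-stable if `diag (d₁, d₂) * A` is Hurwitz for all
`d₁, d₂ > 0`. -/
def DStable (A : Matrix (Fin 2) (Fin 2) ℝ) : Prop :=
  ∀ d₁ d₂ : ℝ, 0 < d₁ → 0 < d₂ → IsHurwitz (Matrix.diagonal ![d₁, d₂] * A)

/-- A 2×2 real matrix with negative trace and positive determinant is Hurwitz. -/
theorem isHurwitz_of_fin_two (M : Matrix (Fin 2) (Fin 2) ℝ)
    (ht : M 0 0 + M 1 1 < 0) (hd : 0 < M 0 0 * M 1 1 - M 0 1 * M 1 0) :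
    IsHurwitz M := by
  intro μ hμ
  rw [spectrum.mem_iff] at hμ
  have h0 : det (algebraMap ℂ (Matrix (Fin 2) (Fin 2) ℂ) μ - M.map (algebraMap ℝ ℂ)) = 0 := by
    by_contra h
    exact hμ ((Matrix.isUnit_iff_isUnit_det _).2 (Ne.isUnit h))
  rw [Matrix.det_fin_two] at h0
  simp only [Matrix.sub_apply, Matrix.map_apply, Matrix.algebraMap_matrix_apply] at h0
  norm_num at h0
  have hre := congrArg Complex.re h0
  have him := congrArg Complex.im h0
  simp [Complex.sub_re, Complex.mul_re, Complex.sub_im, Complex.mul_im] at hre him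
  by_cases hy : μ.im = 0
  · rw [hy] at hre
    by_contra h
    push_neg at h
    nlinarith [mul_nonneg h (neg_nonneg.2 ht.le)]
  · have h2 : (μ.re - M 0 0) + (μ.re - M 1 1) = 0 := by
      have : μ.im * ((μ.re - M 0 0) + (μ.re - M 1 1)) = 0 := by ring_nf; ring_nf at him; linarith
      rcases mul_eq_zero.1 this with h | h
      · exact absurd h hy
      · exact h
    linarith

/-- A 2×2 real matrix with negative diagonal and positive determinant is D-stable. -/
theorem dStable_of_fin_two (A : Matrix (Fin 2) (Fin 2) ℝ)
    (h00 : A 0 0 < 0) (h11 : A 1 1 < 0)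
    (hd : 0 < A 0 0 * A 1 1 - A 0 1 * A 1 0) : DStable A := by
  intro d₁ d₂ hd₁ hd₂
  apply isHurwitz_of_fin_two
  · simp only [Matrix.mul_apply, Matrix.diagonal_apply]
    simp
    nlinarith
  · simp only [Matrix.mul_apply, Matrix.diagonal_apply]
    simp
    nlinarith [mul_pos (mul_pos hd₁ hd₂) hd]

/-- Each entry of a matrix is bounded by its operator 2-norm. -/
theorem abs_entry_le_opNorm2 (B : Matrix (Fin 2) (Fin 2) ℝ) (i j : Fin 2) :
    |B i j| ≤ opNorm2 B := by
  have h := (Matrix.toEuclideanCLM (𝕜 := ℝ) B).le_opNorm (EuclideanSpace.single j 1)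
  rw [EuclideanSpace.norm_single] at h
  simp only [norm_one, mul_one] at h
  refine le_trans ?_ h
  have he : Matrix.toEuclideanCLM (𝕜 := ℝ) B (EuclideanSpace.single j 1) =
      (WithLp.equiv _ _).symm (B *ᵥ Pi.single j 1) := by
    rw [show (EuclideanSpace.single j (1:ℝ)) = (WithLp.equiv _ _).symm (Pi.single j 1) from rfl,
      ]; exact toEuclideanCLM_toLp B (Pi.single j 1)
  rw [he]
  have : B *ᵥ Pi.single j 1 = fun i => B i j := by
    ext i; simp [Matrix.mulVec_single]
  rw [this]
  calc |B i j| = ‖((WithLp.equiv 2 (Fin 2 → ℝ)).symm (fun i => B i j)) i‖ := rfl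
    _ ≤ ‖((WithLp.equiv 2 (Fin 2 → ℝ)).symm (fun i => B i j))‖ := by
        rw [EuclideanSpace.norm_eq]
        rw [show ‖((WithLp.equiv 2 (Fin 2 → ℝ)).symm (fun i => B i j)) i‖ = Real.sqrt (‖((WithLp.equiv 2 (Fin 2 → ℝ)).symm (fun i => B i j)) i‖^2) from (Real.sqrt_sq (norm_nonneg _)).symm]
        apply Real.sqrt_le_sqrt
        apply Finset.single_le_sum _ (Finset.mem_univ i); intro k _; positivity

theorem Aeps_robustly_D_stable (ε : ℝ) (hε : ε < 0) :
    ∃ μ : ℝ, 0 < μ ∧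
      ∀ B : Matrix (Fin 2) (Fin 2) ℝ, opNorm2 B ≤ μ →
        DStable (!![ε, 1; -1, -2] + B) := by
  refine ⟨min (1/4) (-ε/2), lt_min (by norm_num) (by linarith), fun B hB => ?_⟩
  have hμ1 : opNorm2 B ≤ 1/4 := hB.trans (min_le_left _ _)
  have hμ2 : opNorm2 B ≤ -ε/2 := hB.trans (min_le_right _ _)
  have hb : ∀ i j, |B i j| ≤ opNorm2 B := abs_entry_le_opNorm2 B
  have h00 := abs_le.1 ((hb 0 0).trans hμ2)
  have h00' := abs_le.1 ((hb 0 0).trans hμ1)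
  have h01 := abs_le.1 ((hb 0 1).trans hμ1)
  have h10 := abs_le.1 ((hb 1 0).trans hμ1)
  have h11 := abs_le.1 ((hb 1 1).trans hμ1)
  apply dStable_of_fin_two <;>
    simp only [Matrix.add_apply, Matrix.cons_val', Matrix.cons_val_zero, Matrix.cons_val_one,
      Matrix.head_cons, Matrix.head_fin_const, Matrix.empty_val', Matrix.cons_val_fin_one,
      Matrix.of_apply]
  · linarith [h00.2]
  · linarith [h11.2]
  · have hbd : B 0 1 * B 1 0 ≤ 1/16 := by nlinarith [h01.1, h01.2, h10.1, h10.2]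
    have hp : 0 ≤ (-(ε + B 0 0)) * (-(-2 + B 1 1)) := by
      apply mul_nonneg <;> linarith [h00.2, h11.2]
    nlinarith [h01.1, h01.2, h10.1, h10.2]
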